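/- Let p ≥ 1, let v₁ and v₂ be symmetric positive definite p×p real matrices, let d > 0 and n₂ > 0 be real numbers, and let w ∈ ℝᵖ. For λ ≥ 0 define aMSE(λ) = d·trace((v₂ + λv₁)⁻²v₂) + n₂λ²·wᵀ(v₂ + λv₁)⁻²w. Then there exists ε > 0 such that aMSE(λ) < aMSE(0) for every λ ∈ (0, ε); note aMSE(0) = d·trace(v₂⁻¹). -/

import Mathlib

open Matrix

attribute [local instance] Matrix.linftyOpNormedRing Matrix.linftyOpNormedAlgebra

section Aux

variable {p : ℕ}

/-- Congruence of a positive definite matrix by an invertible matrix is positive definite. -/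
lemma posDef_conj_aux {A B : Matrix (Fin p) (Fin p) ℝ} (hA : A.PosDef) (hB : IsUnit B) :
    (Bᵀ * A * B).PosDef := by
  have hBH : Bᴴ = Bᵀ := by
    ext i j; simp [Matrix.conjTranspose_apply]
  refine Matrix.PosDef.of_dotProduct_mulVec_pos ?_ ?_
  · rw [← hBH]
    exact Matrix.isHermitian_conjTranspose_mul_mul B hA.1
  · intro x hx
    have hxB : B *ᵥ x ≠ 0 := by
      have hinj : Function.Injective (B.mulVec) := Matrix.mulVec_injective_iff_isUnit.mpr hB
      intro h
      exact hx (hinj (by simpa using h))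
    have := hA.dotProduct_mulVec_pos hxB
    rw [← hBH]
    simpa only [Matrix.star_mulVec, Matrix.dotProduct_mulVec, Matrix.vecMul_vecMul] using this

/-- The trace of a positive definite real matrix is positive when the dimension is positive. -/
lemma trace_pos_aux (hp : 1 ≤ p) {A : Matrix (Fin p) (Fin p) ℝ} (hA : A.PosDef) :
    0 < A.trace := by
  have hdiag : ∀ i, 0 < A i i := by
    intro i
    have h1 : (Pi.single i (1:ℝ) : Fin p → ℝ) ≠ 0 := by
      intro h
      have := congrFun h i
      simp at this
    have := hA.dotProduct_mulVec_pos h1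
    simpa using this
  have : Nonempty (Fin p) := ⟨⟨0, hp⟩⟩
  rw [Matrix.trace]
  exact Finset.sum_pos (fun i _ => hdiag i) Finset.univ_nonempty

/-- A real function with negative derivative at `0` is smaller than `f 0` just right of `0`. -/
lemma exists_right_lt_of_deriv_neg {f : ℝ → ℝ} {D : ℝ} (hf : HasDerivAt f D 0) (hD : D < 0) :
    ∃ ε > 0, ∀ l : ℝ, 0 < l → l < ε → f l < f 0 := by
  have hslope : Filter.Tendsto (slope f 0) (nhdsWithin 0 {(0:ℝ)}ᶜ) (nhds D) :=
    hasDerivAt_iff_tendsto_slope.mp hf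
  have hev : ∀ᶠ l in nhdsWithin 0 {(0:ℝ)}ᶜ, slope f 0 l < 0 :=
    hslope.eventually_lt_const hD
  have hle : nhdsWithin (0:ℝ) (Set.Ioi 0) ≤ nhdsWithin 0 {(0:ℝ)}ᶜ :=
    nhdsWithin_mono 0 (fun x hx => ne_of_gt hx)
  have hev' : ∀ᶠ l in nhdsWithin (0:ℝ) (Set.Ioi 0), slope f 0 l < 0 := hle hev
  rw [Filter.eventually_iff, mem_nhdsGT_iff_exists_Ioo_subset] at hev'
  obtain ⟨u, hu, hsub⟩ := hev'
  refine ⟨u, hu, fun l hl0 hlu => ?_⟩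
  have hs : slope f 0 l < 0 := hsub ⟨hl0, hlu⟩
  rw [slope_def_field] at hs
  have : f l - f 0 < 0 := by
    have := (div_neg_iff).mp (by simpa using hs)
    rcases this with ⟨h1, h2⟩ | ⟨h1, h2⟩
    · linarith
    · linarith
  linarith

end Aux

/-- Theorem 2 (generalized linear model, deterministic core): there is a range `(0, ε)` of the
dial parameter `λ` on which the asymptotic mean squared error
`aMSE(λ) = d·trace((v₂ + λv₁)⁻² v₂) + n₂ λ²·wᵀ (v₂ + λv₁)⁻² w` (with `M⁻² = (M⁻¹)ᵀ M⁻¹`)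
is strictly smaller than `aMSE(0) = d·trace(v₂⁻¹)`. -/
theorem amse_lt_amse_zero_of_small_lambda
    (p : ℕ) (hp : 1 ≤ p) (v₁ v₂ : Matrix (Fin p) (Fin p) ℝ)
    (hv₁ : v₁.PosDef) (hv₂ : v₂.PosDef)
    (d n₂ : ℝ) (hd : 0 < d) (hn₂ : 0 < n₂) (w : Fin p → ℝ)
    (aMSE : ℝ → ℝ)
    (haMSE : ∀ l : ℝ, aMSE l =
      d * Matrix.trace (((v₂ + l • v₁)⁻¹)ᵀ * (v₂ + l • v₁)⁻¹ * v₂)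
        + n₂ * l ^ 2 * (w ⬝ᵥ ((((v₂ + l • v₁)⁻¹)ᵀ * (v₂ + l • v₁)⁻¹) *ᵥ w))) :
    (∃ ε > 0, ∀ l : ℝ, 0 < l → l < ε → aMSE l < aMSE 0) ∧
      aMSE 0 = d * Matrix.trace v₂⁻¹ := by
  classical
  -- basic symmetry facts
  have hsym2 : v₂ᵀ = v₂ := by
    have := hv₂.1
    rw [Matrix.IsHermitian] at this
    calc v₂ᵀ = v₂ᴴ := by ext i j; simp [Matrix.conjTranspose_apply]
    _ = v₂ := this
  have hsym1 : v₁ᵀ = v₁ := by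
    have := hv₁.1
    rw [Matrix.IsHermitian] at this
    calc v₁ᵀ = v₁ᴴ := by ext i j; simp [Matrix.conjTranspose_apply]
    _ = v₁ := this
  have hdet : IsUnit v₂.det := (Matrix.isUnit_iff_isUnit_det _).mp hv₂.isUnit
  have hsyminv : (v₂⁻¹)ᵀ = v₂⁻¹ := by
    rw [Matrix.transpose_nonsing_inv, hsym2]
  have hmulinv : v₂⁻¹ * v₂ = 1 := Matrix.nonsing_inv_mul _ hdet
  have hinvmul : v₂ * v₂⁻¹ = 1 := Matrix.mul_nonsing_inv _ hdet
  -- aMSE 0 = d * trace v₂⁻¹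
  have h0 : aMSE 0 = d * Matrix.trace v₂⁻¹ := by
    rw [haMSE 0]
    simp only [zero_smul, add_zero, ne_eq, OfNat.ofNat_ne_zero, not_false_eq_true, zero_pow,
      mul_zero, zero_mul]
    rw [hsyminv, Matrix.mul_assoc, hmulinv, Matrix.mul_one]
  refine ⟨?_, h0⟩
  -- the derivative of l ↦ (v₂ + l • v₁)⁻¹ at 0
  set G' : Matrix (Fin p) (Fin p) ℝ := -(v₂⁻¹ * v₁ * v₂⁻¹) with hG'def
  have hG : HasDerivAt (fun l : ℝ => (v₂ + l • v₁)⁻¹) G' 0 := by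
    obtain ⟨u, hu⟩ := hv₂.isUnit
    have hF : HasDerivAt (fun l : ℝ => v₂ + l • v₁) v₁ 0 := by
      have h := ((hasDerivAt_id (0:ℝ)).smul_const v₁).const_add v₂
      simp only [id, one_smul] at h
      exact h
    have hinv := hasFDerivAt_ringInverse (𝕜 := ℝ) u
    rw [show ((u : Matrix (Fin p) (Fin p) ℝ)) = v₂ + (0:ℝ) • v₁ by simp [hu]] at hinv
    have hcomp := hinv.comp_hasDerivAt 0 hF
    have hui : (↑u⁻¹ : Matrix (Fin p) (Fin p) ℝ) = v₂⁻¹ := by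
      rw [Matrix.coe_units_inv, hu]
    rw [show (Ring.inverse ∘ fun l : ℝ => v₂ + l • v₁) = fun l : ℝ => (v₂ + l • v₁)⁻¹ from
      funext fun l => (Matrix.nonsing_inv_eq_ringInverse _).symm] at hcomp
    simp [hui] at hcomp
    exact hcomp
  -- transpose as a continuous linear map
  let T : Matrix (Fin p) (Fin p) ℝ →L[ℝ] Matrix (Fin p) (Fin p) ℝ :=
    LinearMap.toContinuousLinearMap
      ((Matrix.transposeLinearEquiv (Fin p) (Fin p) ℝ ℝ).toLinearMap)
  have hGT : HasDerivAt (fun l : ℝ => ((v₂ + l • v₁)⁻¹)ᵀ) G'ᵀ 0 := by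
    have := T.hasFDerivAt.comp_hasDerivAt 0 hG
    simp [T, Matrix.transposeLinearEquiv] at this
    exact this
  -- value at 0
  have hval0 : (v₂ + (0:ℝ) • v₁)⁻¹ = v₂⁻¹ := by simp
  -- the product (l ↦ Gᵀ * G * v₂)
  have hProd : HasDerivAt
      (fun l : ℝ => ((v₂ + l • v₁)⁻¹)ᵀ * (v₂ + l • v₁)⁻¹ * v₂)
      ((G'ᵀ * v₂⁻¹ + (v₂⁻¹)ᵀ * G') * v₂) 0 := by
    have h1 : HasDerivAt (fun l : ℝ => ((v₂ + l • v₁)⁻¹)ᵀ * (v₂ + l • v₁)⁻¹)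
        (G'ᵀ * v₂⁻¹ + (v₂⁻¹)ᵀ * G') 0 := by
      have := hGT.mul hG
      simp [hval0] at this
      exact this
    exact h1.mul_const v₂
  -- trace as a continuous linear map
  let Tr : Matrix (Fin p) (Fin p) ℝ →L[ℝ] ℝ :=
    LinearMap.toContinuousLinearMap (Matrix.traceLinearMap (Fin p) ℝ ℝ)
  have hTrace : HasDerivAt
      (fun l : ℝ => d * Matrix.trace (((v₂ + l • v₁)⁻¹)ᵀ * (v₂ + l • v₁)⁻¹ * v₂))
      (d * Matrix.trace ((G'ᵀ * v₂⁻¹ + (v₂⁻¹)ᵀ * G') * v₂)) 0 := by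
    have := (Tr.hasFDerivAt.comp_hasDerivAt 0 hProd).const_mul d
    simp [Tr] at this
    exact this
  -- the quadratic form as a continuous linear map in the matrix argument
  let Q : Matrix (Fin p) (Fin p) ℝ →ₗ[ℝ] ℝ :=
    { toFun := fun M => w ⬝ᵥ (M *ᵥ w)
      map_add' := fun M N => by simp [Matrix.add_mulVec, dotProduct_add]
      map_smul' := fun c M => by simp [Matrix.smul_mulVec, dotProduct_smul] }
  let Qc : Matrix (Fin p) (Fin p) ℝ →L[ℝ] ℝ := LinearMap.toContinuousLinearMap Q
  have hQuad : HasDerivAt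
      (fun l : ℝ => n₂ * l ^ 2 * (w ⬝ᵥ ((((v₂ + l • v₁)⁻¹)ᵀ * (v₂ + l • v₁)⁻¹) *ᵥ w))) 0 0 := by
    have hH : HasDerivAt (fun l : ℝ => ((v₂ + l • v₁)⁻¹)ᵀ * (v₂ + l • v₁)⁻¹)
        (G'ᵀ * v₂⁻¹ + (v₂⁻¹)ᵀ * G') 0 := by
      have := hGT.mul hG
      simp [hval0] at this
      exact this
    have hq : HasDerivAt
        (fun l : ℝ => w ⬝ᵥ ((((v₂ + l • v₁)⁻¹)ᵀ * (v₂ + l • v₁)⁻¹) *ᵥ w))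
        (Qc (G'ᵀ * v₂⁻¹ + (v₂⁻¹)ᵀ * G')) 0 := by
      have := Qc.hasFDerivAt.comp_hasDerivAt 0 hH
      simp [Qc, Q] at this
      exact this
    have hc : HasDerivAt (fun l : ℝ => n₂ * l ^ 2) 0 0 := by
      have := (hasDerivAt_pow 2 (0:ℝ)).const_mul n₂
      simpa using this
    have := hc.mul hq
    simp at this
    exact this
  -- total derivative
  have hf : HasDerivAt aMSE (d * Matrix.trace ((G'ᵀ * v₂⁻¹ + (v₂⁻¹)ᵀ * G') * v₂)) 0 := by
    have h := hTrace.add hQuad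
    rw [add_zero] at h
    have : aMSE = fun l : ℝ =>
        d * Matrix.trace (((v₂ + l • v₁)⁻¹)ᵀ * (v₂ + l • v₁)⁻¹ * v₂)
          + n₂ * l ^ 2 * (w ⬝ᵥ ((((v₂ + l • v₁)⁻¹)ᵀ * (v₂ + l • v₁)⁻¹) *ᵥ w)) :=
      funext haMSE
    rw [this]
    exact h
  -- the derivative is negative
  set K : Matrix (Fin p) (Fin p) ℝ := v₂⁻¹ * v₁ * v₂⁻¹ with hKdef
  have hKT : Kᵀ = K := by
    rw [hKdef, Matrix.transpose_mul, Matrix.transpose_mul, hsyminv, hsym1, Matrix.mul_assoc]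
  have htr_eq : Matrix.trace ((G'ᵀ * v₂⁻¹ + (v₂⁻¹)ᵀ * G') * v₂) = -(2 * Matrix.trace K) := by
    have hG'T : G'ᵀ = -K := by
      rw [hG'def, Matrix.transpose_neg, hKT]
    rw [hG'T, hG'def, hsyminv]
    have e : (-K * v₂⁻¹ + v₂⁻¹ * -K) * v₂ = -(K * (v₂⁻¹ * v₂)) + -(v₂⁻¹ * K * v₂) := by
      noncomm_ring
    rw [e, hmulinv, Matrix.mul_one, Matrix.trace_add, Matrix.trace_neg, Matrix.trace_neg,
      Matrix.trace_conj' hv₂.isUnit]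
    ring
  have hKpos : (0:ℝ) < Matrix.trace K := by
    have hKposdef : K.PosDef := by
      have := posDef_conj_aux (p := p) hv₁ hv₂.inv.isUnit
      rw [hsyminv] at this
      exact this
    exact trace_pos_aux hp hKposdef
  have hDneg : d * Matrix.trace ((G'ᵀ * v₂⁻¹ + (v₂⁻¹)ᵀ * G') * v₂) < 0 := by
    rw [htr_eq]
    have : 0 < 2 * Matrix.trace K := by linarith
    nlinarith
  exact exists_right_lt_of_deriv_neg hf hDneg
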